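/- If U₁,...,Uₙ,V₁,...,Vₙ are 2n jointly independent uniform [0,1] random variables, then the statistic φₙ' = (3n²/(n²-1)) ( n⁻² ∑_{i,j} |Uᵢ - Vⱼ| - n⁻¹ ∑_i |Uᵢ - Vᵢ| ) has variance 2n²/(5(n+1)²(n-1)). -/

import Mathlib

open MeasureTheory ProbabilityTheory Finset

local notation "μ01" => (volume.restrict (Set.Icc (0:ℝ) 1))

instance : IsProbabilityMeasure μ01 := ⟨by simp [Real.volume_Icc]⟩

lemma FR.icc_to_interval (f : ℝ → ℝ) :
    ∫ v in Set.Icc (0:ℝ) 1, f v = ∫ v in (0:ℝ)..1, f v := by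
  rw [intervalIntegral.integral_of_le zero_le_one, integral_Icc_eq_integral_Ioc]

lemma FR.int_abs (u : ℝ) (hu : u ∈ Set.Icc (0:ℝ) 1) :
    ∫ v in Set.Icc (0:ℝ) 1, |u - v| = u^2 - u + 1/2 := by
  obtain ⟨h0, h1⟩ := hu
  rw [FR.icc_to_interval]
  have hi : ∀ a b : ℝ, IntervalIntegrable (fun v => |u - v|) volume a b :=
    fun a b => (continuous_const.sub continuous_id').abs.intervalIntegrable a b
  rw [← intervalIntegral.integral_add_adjacent_intervals (hi 0 u) (hi u 1)]
  have e1 : ∫ v in (0:ℝ)..u, |u - v| = u^2/2 := by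
    rw [intervalIntegral.integral_congr (g := fun v => u - v) ?_]
    · rw [intervalIntegral.integral_sub (intervalIntegrable_const) intervalIntegral.intervalIntegrable_id,
        intervalIntegral.integral_const, integral_id]
      simp only [smul_eq_mul]; ring
    · intro v hv
      rw [Set.uIcc_of_le h0] at hv
      show |u - v| = u - v
      exact abs_of_nonneg (by linarith [hv.2])
  have e2 : ∫ v in u..(1:ℝ), |u - v| = (1-u)^2/2 := by
    rw [intervalIntegral.integral_congr (g := fun v => v - u) ?_]
    · rw [intervalIntegral.integral_sub intervalIntegral.intervalIntegrable_id intervalIntegrable_const,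
        intervalIntegral.integral_const, integral_id]
      simp only [smul_eq_mul]; ring
    · intro v hv
      rw [Set.uIcc_of_le h1] at hv
      show |u - v| = v - u
      rw [abs_sub_comm]
      exact abs_of_nonneg (by linarith [hv.1])
  rw [e1, e2]; ring

lemma FR.int_sq_abs (u : ℝ) :
    ∫ v in Set.Icc (0:ℝ) 1, |u - v|^2 = u^2 - u + 1/3 := by
  rw [FR.icc_to_interval]
  have : (fun v : ℝ => |u - v|^2) = fun v => u^2 - (2*u)*v + v^2 := by
    funext v; rw [sq_abs]; ring
  rw [this]
  have h1 : IntervalIntegrable (fun v : ℝ => u^2 - (2*u)*v) volume 0 1 :=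
    (intervalIntegrable_const.sub ((intervalIntegral.intervalIntegrable_id).const_mul _))
  have h2 : IntervalIntegrable (fun v : ℝ => v^2) volume 0 1 :=
    (intervalIntegral.intervalIntegrable_pow 2)
  rw [intervalIntegral.integral_add h1 h2,
    intervalIntegral.integral_sub intervalIntegrable_const ((intervalIntegral.intervalIntegrable_id).const_mul _),
    intervalIntegral.integral_const, intervalIntegral.integral_const_mul, integral_id, integral_pow]
  norm_num
  try ring

lemma FR.int_g : ∫ u in Set.Icc (0:ℝ) 1, (u^2 - u + 1/2) = 1/3 := by
  rw [FR.icc_to_interval]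
  have h1 : IntervalIntegrable (fun u : ℝ => u^2 - u) volume 0 1 :=
    ((intervalIntegral.intervalIntegrable_pow 2).sub intervalIntegral.intervalIntegrable_id)
  rw [show (fun u : ℝ => u^2 - u + 1/2) = fun u => (u^2 - u) + 1/2 from rfl,
    intervalIntegral.integral_add h1 intervalIntegrable_const,
    intervalIntegral.integral_sub (intervalIntegral.intervalIntegrable_pow 2) intervalIntegral.intervalIntegrable_id,
    intervalIntegral.integral_const, integral_id, integral_pow]
  norm_num

lemma FR.int_h : ∫ u in Set.Icc (0:ℝ) 1, (u^2 - u + 1/3) = 1/6 := by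
  rw [FR.icc_to_interval]
  have h1 : IntervalIntegrable (fun u : ℝ => u^2 - u) volume 0 1 :=
    ((intervalIntegral.intervalIntegrable_pow 2).sub intervalIntegral.intervalIntegrable_id)
  rw [show (fun u : ℝ => u^2 - u + 1/3) = fun u => (u^2 - u) + 1/3 from rfl,
    intervalIntegral.integral_add h1 intervalIntegrable_const,
    intervalIntegral.integral_sub (intervalIntegral.intervalIntegrable_pow 2) intervalIntegral.intervalIntegrable_id,
    intervalIntegral.integral_const, integral_id, integral_pow]
  norm_num
  try ring

lemma FR.int_g2 : ∫ u in Set.Icc (0:ℝ) 1, (u^2 - u + 1/2)^2 = 7/60 := by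
  rw [FR.icc_to_interval]
  have : (fun u : ℝ => (u^2 - u + 1/2)^2) = fun u => u^4 - 2*u^3 + 2*u^2 - u + 1/4 := by
    funext u; ring
  rw [this]
  have i4 := intervalIntegral.intervalIntegrable_pow (μ := volume) (a := (0:ℝ)) (b := 1) 4
  have i3 := intervalIntegral.intervalIntegrable_pow (μ := volume) (a := (0:ℝ)) (b := 1) 3
  have i2 := intervalIntegral.intervalIntegrable_pow (μ := volume) (a := (0:ℝ)) (b := 1) 2
  have i1 := intervalIntegral.intervalIntegrable_id (μ := volume) (a := (0:ℝ)) (b := 1)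
  have e : (fun u : ℝ => u^4 - 2*u^3 + 2*u^2 - u + 1/4)
      = fun u => (((u^4 - 2*u^3) + 2*u^2) - u) + 1/4 := by funext u; ring
  rw [e, intervalIntegral.integral_add (((i4.sub (i3.const_mul 2)).add (i2.const_mul 2)).sub i1) intervalIntegrable_const,
    intervalIntegral.integral_sub ((i4.sub (i3.const_mul 2)).add (i2.const_mul 2)) i1,
    intervalIntegral.integral_add (i4.sub (i3.const_mul 2)) (i2.const_mul 2),
    intervalIntegral.integral_sub i4 (i3.const_mul 2),
    intervalIntegral.integral_const_mul, intervalIntegral.integral_const_mul,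
    intervalIntegral.integral_const, integral_id, integral_pow, integral_pow, integral_pow]
  norm_num

section Prob
variable {Ω : Type*} [MeasurableSpace Ω] {P : Measure Ω} [IsProbabilityMeasure P]

lemma FR.ae_mem_Icc {X : Ω → ℝ} (hX : Measurable X)
    (hl : Measure.map X P = μ01) : ∀ᵐ ω ∂P, X ω ∈ Set.Icc (0:ℝ) 1 := by
  rw [ae_iff]
  have h : {ω | ¬ X ω ∈ Set.Icc (0:ℝ) 1} = X ⁻¹' (Set.Icc (0:ℝ) 1)ᶜ := rfl
  rw [h, ← Measure.map_apply hX measurableSet_Icc.compl, hl,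
    Measure.restrict_apply measurableSet_Icc.compl]
  simp

lemma FR.map_pair {X Y : Ω → ℝ} (hX : Measurable X) (hY : Measurable Y)
    (h : IndepFun X Y P) (hXl : Measure.map X P = μ01) (hYl : Measure.map Y P = μ01) :
    Measure.map (fun ω => (X ω, Y ω)) P = (μ01).prod μ01 := by
  rw [(indepFun_iff_map_prod_eq_prod_map_map hX.aemeasurable hY.aemeasurable).1 h, hXl, hYl]

lemma FR.integrable_on_prod {f : ℝ × ℝ → ℝ} (hf : Measurable f)
    (hb : ∀ p : ℝ × ℝ, p.1 ∈ Set.Icc (0:ℝ) 1 → p.2 ∈ Set.Icc (0:ℝ) 1 → |f p| ≤ 1) :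
    Integrable f ((μ01).prod μ01) := by
  have hmem : ∀ᵐ p ∂((μ01).prod μ01), p ∈ (Set.Icc (0:ℝ) 1) ×ˢ (Set.Icc (0:ℝ) 1) := by
    rw [Measure.prod_restrict]
    exact ae_restrict_mem (measurableSet_Icc.prod measurableSet_Icc)
  refine (MemLp.of_bound hf.aestronglyMeasurable 1 ?_).integrable le_rfl
  filter_upwards [hmem] with p hp
  rw [Real.norm_eq_abs]; exact hb p hp.1 hp.2

lemma FR.abs_sub_le_one {u v : ℝ} (hu : u ∈ Set.Icc (0:ℝ) 1) (hv : v ∈ Set.Icc (0:ℝ) 1) :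
    |u - v| ≤ 1 := by
  rw [abs_sub_le_iff]
  obtain ⟨h1, h2⟩ := hu; obtain ⟨h3, h4⟩ := hv
  constructor <;> linarith
end Prob

section Prob2
variable {Ω : Type*} [MeasurableSpace Ω] {P : Measure Ω} [IsProbabilityMeasure P]

lemma FR.exp_abs {X Y : Ω → ℝ} (hX : Measurable X) (hY : Measurable Y)
    (h : IndepFun X Y P) (hXl : Measure.map X P = μ01) (hYl : Measure.map Y P = μ01) :
    ∫ ω, |X ω - Y ω| ∂P = 1/3 := by
  have hm : AEMeasurable (fun ω => (X ω, Y ω)) P := (hX.prodMk hY).aemeasurable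
  have hfm : Measurable (fun p : ℝ × ℝ => |p.1 - p.2|) := (measurable_fst.sub measurable_snd).abs
  have key : ∫ ω, |X ω - Y ω| ∂P = ∫ p : ℝ × ℝ, |p.1 - p.2| ∂((μ01).prod μ01) := by
    rw [← FR.map_pair hX hY h hXl hYl, integral_map hm hfm.aestronglyMeasurable]
  rw [key, integral_prod _ (FR.integrable_on_prod hfm ?_)]
  · rw [integral_congr_ae (g := fun u : ℝ => u^2 - u + 1/2) ?_]
    · exact FR.int_g
    · filter_upwards [ae_restrict_mem measurableSet_Icc] with u hu
      exact FR.int_abs u hu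
  · rintro ⟨u, v⟩ hu hv
    rw [abs_abs]
    exact FR.abs_sub_le_one hu hv

lemma FR.exp_sq_abs {X Y : Ω → ℝ} (hX : Measurable X) (hY : Measurable Y)
    (h : IndepFun X Y P) (hXl : Measure.map X P = μ01) (hYl : Measure.map Y P = μ01) :
    ∫ ω, |X ω - Y ω| * |X ω - Y ω| ∂P = 1/6 := by
  have hm : AEMeasurable (fun ω => (X ω, Y ω)) P := (hX.prodMk hY).aemeasurable
  have hfm : Measurable (fun p : ℝ × ℝ => |p.1 - p.2| * |p.1 - p.2|) :=
    ((measurable_fst.sub measurable_snd).abs).mul ((measurable_fst.sub measurable_snd).abs)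
  have key : ∫ ω, |X ω - Y ω| * |X ω - Y ω| ∂P
      = ∫ p : ℝ × ℝ, |p.1 - p.2| * |p.1 - p.2| ∂((μ01).prod μ01) := by
    rw [← FR.map_pair hX hY h hXl hYl, integral_map hm hfm.aestronglyMeasurable]
  rw [key, integral_prod _ (FR.integrable_on_prod hfm ?_)]
  · have e1 : ∀ u : ℝ, ∫ v, |u - v| * |u - v| ∂μ01 = u^2 - u + 1/3 := by
      intro u
      rw [show (fun v : ℝ => |u - v| * |u - v|) = fun v => |u - v|^2 by funext v; ring]
      exact FR.int_sq_abs u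
    rw [integral_congr_ae (g := fun u : ℝ => u^2 - u + 1/3) (Filter.Eventually.of_forall e1)]
    exact FR.int_h
  · rintro ⟨u, v⟩ hu hv
    have h1 := FR.abs_sub_le_one hu hv
    have h0 : (0:ℝ) ≤ |u - v| := abs_nonneg _
    rw [abs_mul, abs_abs]
    nlinarith

lemma FR.exp_triple {X Y Z : Ω → ℝ} (hX : Measurable X) (hY : Measurable Y) (hZ : Measurable Z)
    (h1 : IndepFun X (fun ω => (Y ω, Z ω)) P) (h2 : IndepFun Y Z P)
    (hXl : Measure.map X P = μ01) (hYl : Measure.map Y P = μ01)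
    (hZl : Measure.map Z P = μ01) :
    ∫ ω, |X ω - Y ω| * |X ω - Z ω| ∂P = 7/60 := by
  have hYZ : Measurable (fun ω => (Y ω, Z ω)) := hY.prodMk hZ
  have hm : AEMeasurable (fun ω => (X ω, (Y ω, Z ω))) P := (hX.prodMk hYZ).aemeasurable
  have hfm : Measurable (fun p : ℝ × ℝ × ℝ => |p.1 - p.2.1| * |p.1 - p.2.2|) := by fun_prop
  have hmap : Measure.map (fun ω => (X ω, (Y ω, Z ω))) P = (μ01).prod ((μ01).prod μ01) := by
    rw [(indepFun_iff_map_prod_eq_prod_map_map hX.aemeasurable hYZ.aemeasurable).1 h1, hXl,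
      FR.map_pair hY hZ h2 hYl hZl]
  have key : ∫ ω, |X ω - Y ω| * |X ω - Z ω| ∂P
      = ∫ p : ℝ × ℝ × ℝ, |p.1 - p.2.1| * |p.1 - p.2.2| ∂((μ01).prod ((μ01).prod μ01)) := by
    rw [← hmap, integral_map hm hfm.aestronglyMeasurable]
  have hres : (μ01).prod ((μ01).prod μ01)
      = (volume.prod (volume.prod volume)).restrict
          ((Set.Icc (0:ℝ) 1) ×ˢ ((Set.Icc (0:ℝ) 1) ×ˢ (Set.Icc (0:ℝ) 1))) := by
    rw [Measure.prod_restrict, Measure.prod_restrict]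
  have hint : Integrable (fun p : ℝ × ℝ × ℝ => |p.1 - p.2.1| * |p.1 - p.2.2|)
      ((μ01).prod ((μ01).prod μ01)) := by
    have hmem : ∀ᵐ p ∂((μ01).prod ((μ01).prod μ01)),
        p ∈ (Set.Icc (0:ℝ) 1) ×ˢ ((Set.Icc (0:ℝ) 1) ×ˢ (Set.Icc (0:ℝ) 1)) := by
      rw [hres]
      exact ae_restrict_mem (measurableSet_Icc.prod (measurableSet_Icc.prod measurableSet_Icc))
    refine (MemLp.of_bound hfm.aestronglyMeasurable 1 ?_).integrable le_rfl
    filter_upwards [hmem] with p hp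
    rw [Real.norm_eq_abs, abs_mul, abs_abs, abs_abs]
    have b1 := FR.abs_sub_le_one hp.1 hp.2.1
    have b2 := FR.abs_sub_le_one hp.1 hp.2.2
    have c1 := abs_nonneg (p.1 - p.2.1); have c2 := abs_nonneg (p.1 - p.2.2)
    nlinarith
  rw [key, integral_prod _ hint]
  have e1 : ∀ᵐ u ∂μ01, (∫ q : ℝ × ℝ, |u - q.1| * |u - q.2| ∂((μ01).prod μ01))
      = (u^2 - u + 1/2)^2 := by
    filter_upwards [ae_restrict_mem measurableSet_Icc] with u hu
    have hp := integral_prod_mul (μ := μ01) (ν := μ01)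
      (f := fun v : ℝ => |u - v|) (g := fun w : ℝ => |u - w|)
    rw [hp, FR.int_abs u hu]
    ring
  rw [integral_congr_ae e1]
  exact FR.int_g2
end Prob2

theorem footrule_first_representation_variance
    {Ω : Type*} [MeasureSpace Ω] [IsProbabilityMeasure (ℙ : Measure Ω)]
    (n : ℕ) (hn : 2 ≤ n) (U V : Fin n → Ω → ℝ)
    (hU : ∀ i, Measurable (U i)) (hV : ∀ i, Measurable (V i))
    (hInd : iIndepFun (Sum.elim U V) ℙ)
    (hUunif : ∀ i, Measure.map (U i) ℙ = volume.restrict (Set.Icc (0:ℝ) 1))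
    (hVunif : ∀ i, Measure.map (V i) ℙ = volume.restrict (Set.Icc (0:ℝ) 1)) :
    variance (fun ω => (3 * (n:ℝ)^2 / ((n:ℝ)^2 - 1)) *
        ((1 / (n:ℝ)^2) * ∑ i : Fin n, ∑ j : Fin n, |U i ω - V j ω|
          - (1 / (n:ℝ)) * ∑ i : Fin n, |U i ω - V i ω|)) ℙ
      = 2 * (n:ℝ)^2 / (5 * ((n:ℝ) + 1)^2 * ((n:ℝ) - 1)) := by
  classical
  have hn2 : (2:ℝ) ≤ (n:ℝ) := by exact_mod_cast hn
  have hnne : (n:ℝ) ≠ 0 := by linarith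
  -- measurability of the family
  have hWm : ∀ a : Fin n ⊕ Fin n, Measurable (Sum.elim U V a) := by
    rintro (i | i); exacts [hU i, hV i]
  -- first moments
  have m1 : ∀ i j, ∫ ω, |U i ω - V j ω| ∂ℙ = 1/3 := fun i j =>
    FR.exp_abs (hU i) (hV j)
      (hInd.indepFun (show (Sum.inl i : Fin n ⊕ Fin n) ≠ Sum.inr j by simp))
      (hUunif i) (hVunif j)
  -- second moments
  have m2 : ∀ i j k l, ∫ ω, |U i ω - V j ω| * |U k ω - V l ω| ∂ℙ =
      1/9 + (if i = k then (1:ℝ)/180 else 0) + (if j = l then (1:ℝ)/180 else 0)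
        + (if i = k ∧ j = l then (2:ℝ)/45 else 0) := by
    intro i j k l
    by_cases hik : i = k
    · subst hik
      by_cases hjl : j = l
      · subst hjl
        rw [FR.exp_sq_abs (hU i) (hV j)
          (hInd.indepFun (show (Sum.inl i : Fin n ⊕ Fin n) ≠ Sum.inr j by simp))
          (hUunif i) (hVunif j)]
        norm_num
      · rw [FR.exp_triple (hU i) (hV j) (hV l)
          ((hInd.indepFun_prodMk hWm (Sum.inr j) (Sum.inr l) (Sum.inl i)
            (by simp) (by simp)).symm)
          (hInd.indepFun (show (Sum.inr j : Fin n ⊕ Fin n) ≠ Sum.inr l by simpa using hjl))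
          (hUunif i) (hVunif j) (hVunif l)]
        simp [hjl]
        norm_num
    · by_cases hjl : j = l
      · subst hjl
        have e : ∫ ω, |U i ω - V j ω| * |U k ω - V j ω| ∂ℙ
            = ∫ ω, |V j ω - U i ω| * |V j ω - U k ω| ∂ℙ := by
          refine integral_congr_ae (Filter.Eventually.of_forall fun ω => ?_)
          show |U i ω - V j ω| * |U k ω - V j ω| = |V j ω - U i ω| * |V j ω - U k ω|
          rw [abs_sub_comm (U i ω), abs_sub_comm (U k ω)]
        rw [e, FR.exp_triple (hV j) (hU i) (hU k)
          ((hInd.indepFun_prodMk hWm (Sum.inl i) (Sum.inl k) (Sum.inr j)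
            (by simp) (by simp)).symm)
          (hInd.indepFun (show (Sum.inl i : Fin n ⊕ Fin n) ≠ Sum.inl k by simpa using hik))
          (hVunif j) (hUunif i) (hUunif k)]
        simp [hik]
        norm_num
      · have hpair : IndepFun (fun ω => (U i ω, V j ω)) (fun ω => (U k ω, V l ω)) ℙ :=
          hInd.indepFun_prodMk_prodMk hWm (Sum.inl i) (Sum.inr j) (Sum.inl k) (Sum.inr l)
            (by simpa using hik) (by simp) (by simp) (by simpa using hjl)
        have hcomp : IndepFun (fun ω => |U i ω - V j ω|) (fun ω => |U k ω - V l ω|) ℙ :=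
          hpair.comp (measurable_fst.sub measurable_snd).abs
            (measurable_fst.sub measurable_snd).abs
        have h2 : ∫ ω, |U i ω - V j ω| * |U k ω - V l ω| ∂ℙ
            = (∫ ω, |U i ω - V j ω| ∂ℙ) * ∫ ω, |U k ω - V l ω| ∂ℙ :=
          hcomp.integral_fun_mul_eq_mul_integral (((hU i).sub (hV j)).abs).aestronglyMeasurable
            (((hU k).sub (hV l)).abs).aestronglyMeasurable
        rw [h2, m1 i j, m1 k l]
        simp [hik, hjl]
        norm_num
  -- integrability
  have haeX : ∀ i j, ∀ᵐ ω ∂ℙ, |U i ω - V j ω| ≤ 1 := by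
    intro i j
    filter_upwards [FR.ae_mem_Icc (hU i) (hUunif i), FR.ae_mem_Icc (hV j) (hVunif j)]
      with ω h1 h2
    exact FR.abs_sub_le_one h1 h2
  have intX : ∀ i j, Integrable (fun ω => |U i ω - V j ω|) ℙ := by
    intro i j
    refine (MemLp.of_bound (((hU i).sub (hV j)).abs).aestronglyMeasurable 1 ?_).integrable le_rfl
    filter_upwards [haeX i j] with ω h
    rwa [Real.norm_eq_abs, abs_abs]
  have intXX : ∀ i j k l, Integrable (fun ω => |U i ω - V j ω| * |U k ω - V l ω|) ℙ := by
    intro i j k l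
    refine (MemLp.of_bound ((((hU i).sub (hV j)).abs.mul
      (((hU k).sub (hV l)).abs))).aestronglyMeasurable 1 ?_).integrable le_rfl
    filter_upwards [haeX i j, haeX k l] with ω h1 h2
    show ‖|U i ω - V j ω| * |U k ω - V l ω|‖ ≤ 1
    rw [Real.norm_eq_abs, abs_mul, abs_abs, abs_abs]
    have c1 := abs_nonneg (U i ω - V j ω); have c2 := abs_nonneg (U k ω - V l ω)
    nlinarith
  -- coefficients
  set c : Fin n → Fin n → ℝ := fun i j => 1/(n:ℝ)^2 - if j = i then 1/(n:ℝ) else 0 with hc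
  have hrow : ∀ i, ∑ j, c i j = 0 := by
    intro i
    simp only [hc, Finset.sum_sub_distrib, Finset.sum_const, Finset.card_univ,
      Fintype.card_fin, Finset.sum_ite_eq' Finset.univ i, Finset.mem_univ, if_true,
      nsmul_eq_mul]
    field_simp
    ring
  have hcol : ∀ j, ∑ i, c i j = 0 := by
    intro j
    simp only [hc, Finset.sum_sub_distrib, Finset.sum_const, Finset.card_univ,
      Fintype.card_fin, Finset.sum_ite_eq Finset.univ j, Finset.mem_univ, if_true,
      nsmul_eq_mul]
    field_simp
    ring
  have hsq : ∑ i, ∑ j, c i j * c i j = ((n:ℝ)-1)/(n:ℝ)^2 := by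
    have h1 : ∀ i j : Fin n, c i j * c i j
        = 1/(n:ℝ)^4 + (if j = i then (1/(n:ℝ)^2 - 1/(n:ℝ))^2 - 1/(n:ℝ)^4 else 0) := by
      intro i j
      by_cases h : j = i <;> simp [hc, h] <;> ring
    simp only [h1, Finset.sum_add_distrib, Finset.sum_const, Finset.card_univ,
      Fintype.card_fin, Finset.sum_ite_eq' Finset.univ, Finset.mem_univ, if_true,
      nsmul_eq_mul]
    field_simp
    ring
  -- the centered statistic
  set T : Ω → ℝ := fun ω => ∑ i, ∑ j, c i j * |U i ω - V j ω| with hT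
  have hrepr : ∀ ω, 1 / (n:ℝ)^2 * ∑ i : Fin n, ∑ j : Fin n, |U i ω - V j ω|
      - 1 / (n:ℝ) * ∑ i : Fin n, |U i ω - V i ω| = T ω := by
    intro ω
    rw [hT, Finset.mul_sum, Finset.mul_sum, ← Finset.sum_sub_distrib]
    refine Finset.sum_congr rfl fun i _ => ?_
    rw [Finset.mul_sum,
      show (1/(n:ℝ)) * |U i ω - V i ω|
        = ∑ j, if j = i then (1/(n:ℝ)) * |U i ω - V j ω| else 0 by
          rw [Finset.sum_ite_eq' Finset.univ i]; simp,
      ← Finset.sum_sub_distrib]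
    refine Finset.sum_congr rfl fun j _ => ?_
    by_cases h : j = i
    · subst h; simp [hc]; ring
    · simp [hc, h]
  have hTm : Measurable T := by
    apply Finset.measurable_sum
    intro i _
    apply Finset.measurable_sum
    intro j _
    exact (((hU i).sub (hV j)).abs).const_mul _
  have hT2 : MemLp T 2 ℙ := by
    refine MemLp.of_bound hTm.aestronglyMeasurable (∑ i, ∑ j, |c i j|) ?_
    have hall : ∀ᵐ ω ∂ℙ, ∀ i j, |U i ω - V j ω| ≤ 1 :=
      ae_all_iff.2 fun i => ae_all_iff.2 fun j => haeX i j
    filter_upwards [hall] with ω h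
    rw [Real.norm_eq_abs, hT]
    calc abs (∑ i, ∑ j, c i j * |U i ω - V j ω|)
        ≤ ∑ i, abs (∑ j, c i j * |U i ω - V j ω|) := Finset.abs_sum_le_sum_abs _ _
      _ ≤ ∑ i, ∑ j, |c i j| := by
          refine Finset.sum_le_sum fun i _ => ?_
          calc abs (∑ j, c i j * |U i ω - V j ω|) ≤ ∑ j, abs (c i j * |U i ω - V j ω|) :=
                Finset.abs_sum_le_sum_abs _ _
            _ ≤ ∑ j, |c i j| := by
                refine Finset.sum_le_sum fun j _ => ?_
                rw [abs_mul, abs_abs]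
                nlinarith [abs_nonneg (c i j), abs_nonneg (U i ω - V j ω), h i j]
  -- expectation of T
  have hET : ∫ ω, T ω ∂ℙ = 0 := by
    rw [hT, integral_finset_sum _ fun i _ =>
      integrable_finset_sum _ fun j _ => (intX i j).const_mul (c i j)]
    have h1 : ∀ i : Fin n, ∫ ω, ∑ j, c i j * |U i ω - V j ω| ∂ℙ = 0 := by
      intro i
      rw [integral_finset_sum _ fun j _ => (intX i j).const_mul (c i j)]
      have h2 : ∀ j : Fin n, ∫ ω, c i j * |U i ω - V j ω| ∂ℙ = c i j * (1/3) := by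
        intro j; rw [integral_const_mul, m1 i j]
      rw [Finset.sum_congr rfl fun j _ => h2 j, ← Finset.sum_mul, hrow i, zero_mul]
    rw [Finset.sum_congr rfl fun i _ => h1 i, Finset.sum_const, smul_zero]
  -- second moment of T
  have helperA : ∀ (x : ℝ) (r : Fin n → ℝ), ∑ k, ∑ l, (x * c k l) * r k = 0 := by
    intro x r
    have h : ∀ k, ∑ l, (x * c k l) * r k = (x * r k) * ∑ l, c k l := by
      intro k; rw [Finset.mul_sum]; exact Finset.sum_congr rfl fun l _ => by ring
    rw [Finset.sum_congr rfl fun k _ => h k]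
    simp [hrow]
  have helperB : ∀ (x a : ℝ) (j : Fin n),
      ∑ k, ∑ l, (x * c k l) * (if j = l then a else 0) = 0 := by
    intro x a j
    have h : ∀ k, ∑ l, (x * c k l) * (if j = l then a else 0) = (x * a) * c k j := by
      intro k
      simp only [mul_ite, mul_zero, Finset.sum_ite_eq, Finset.mem_univ, if_true]
      ring
    rw [Finset.sum_congr rfl fun k _ => h k, ← Finset.mul_sum, hcol j, mul_zero]
  have helperC : ∀ (x b : ℝ) (i j : Fin n),
      ∑ k, ∑ l, (x * c k l) * (if i = k ∧ j = l then b else 0) = (x * c i j) * b := by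
    intro x b i j
    rw [Finset.sum_eq_single_of_mem i (Finset.mem_univ i) ?_]
    · simp only [true_and, mul_ite, mul_zero, Finset.sum_ite_eq, Finset.mem_univ, if_true]
    · intro k _ hk
      have hik : ¬ (i = k) := fun h => hk h.symm
      simp [hik]
  have hET2 : ∫ ω, T ω ^ 2 ∂ℙ = 2/45 * (((n:ℝ)-1)/(n:ℝ)^2) := by
    have hTsq : ∀ ω, T ω ^ 2
        = ∑ i, ∑ j, ∑ k, ∑ l, (c i j * c k l) * (|U i ω - V j ω| * |U k ω - V l ω|) := by
      intro ω
      rw [hT, sq, Finset.sum_mul_sum]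
      refine Finset.sum_congr rfl fun i _ => ?_
      rw [Finset.sum_congr rfl fun k (_ : k ∈ Finset.univ) => Finset.sum_mul_sum
        Finset.univ Finset.univ (fun j => c i j * |U i ω - V j ω|)
        (fun l => c k l * |U k ω - V l ω|), Finset.sum_comm]
      refine Finset.sum_congr rfl fun j _ => Finset.sum_congr rfl fun k _ =>
        Finset.sum_congr rfl fun l _ => by ring
    have hint3 : ∀ i j k, Integrable
        (fun ω => ∑ l, (c i j * c k l) * (|U i ω - V j ω| * |U k ω - V l ω|)) ℙ :=
      fun i j k => integrable_finset_sum _ fun l _ => (intXX i j k l).const_mul _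
    have hint2 : ∀ i j, Integrable
        (fun ω => ∑ k, ∑ l, (c i j * c k l) * (|U i ω - V j ω| * |U k ω - V l ω|)) ℙ :=
      fun i j => integrable_finset_sum _ fun k _ => hint3 i j k
    have hint1 : ∀ i, Integrable
        (fun ω => ∑ j, ∑ k, ∑ l, (c i j * c k l) * (|U i ω - V j ω| * |U k ω - V l ω|)) ℙ :=
      fun i => integrable_finset_sum _ fun j _ => hint2 i j
    calc ∫ ω, T ω ^ 2 ∂ℙ
        = ∫ ω, ∑ i, ∑ j, ∑ k, ∑ l,
            (c i j * c k l) * (|U i ω - V j ω| * |U k ω - V l ω|) ∂ℙ := by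
          exact integral_congr_ae (Filter.Eventually.of_forall fun ω => hTsq ω)
      _ = ∑ i, ∑ j, ∑ k, ∑ l, (c i j * c k l) *
            ∫ ω, |U i ω - V j ω| * |U k ω - V l ω| ∂ℙ := by
          rw [integral_finset_sum _ fun i _ => hint1 i]
          refine Finset.sum_congr rfl fun i _ => ?_
          rw [integral_finset_sum _ fun j _ => hint2 i j]
          refine Finset.sum_congr rfl fun j _ => ?_
          rw [integral_finset_sum _ fun k _ => hint3 i j k]
          refine Finset.sum_congr rfl fun k _ => ?_
          rw [integral_finset_sum _ fun l _ => (intXX i j k l).const_mul _]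
          exact Finset.sum_congr rfl fun l _ => integral_const_mul _ _
      _ = 2/45 * (((n:ℝ)-1)/(n:ℝ)^2) := by
          rw [Finset.sum_congr rfl fun i (_ : i ∈ Finset.univ) =>
            Finset.sum_congr rfl fun j (_ : j ∈ Finset.univ) =>
            Finset.sum_congr rfl fun k (_ : k ∈ Finset.univ) =>
            Finset.sum_congr rfl fun l (_ : l ∈ Finset.univ) => by rw [m2 i j k l]]
          simp only [mul_add, Finset.sum_add_distrib]
          have e1 : ∀ i j : Fin n,
              ∑ k, ∑ l, (c i j * c k l) * (1/9 : ℝ) = 0 :=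
            fun i j => helperA (c i j) (fun _ => 1/9)
          have e2 : ∀ i j : Fin n,
              ∑ k, ∑ l, (c i j * c k l) * (if i = k then (1:ℝ)/180 else 0) = 0 :=
            fun i j => helperA (c i j) (fun k => if i = k then (1:ℝ)/180 else 0)
          have e3 : ∀ i j : Fin n,
              ∑ k, ∑ l, (c i j * c k l) * (if j = l then (1:ℝ)/180 else 0) = 0 :=
            fun i j => helperB (c i j) (1/180) j
          have e4 : ∀ i j : Fin n,
              ∑ k, ∑ l, (c i j * c k l) * (if i = k ∧ j = l then (2:ℝ)/45 else 0)
                = (c i j * c i j) * (2/45) :=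
            fun i j => helperC (c i j) (2/45) i j
          rw [Finset.sum_congr rfl fun i _ => Finset.sum_congr rfl fun j _ => e1 i j,
            Finset.sum_congr rfl fun i _ => Finset.sum_congr rfl fun j _ => e2 i j,
            Finset.sum_congr rfl fun i _ => Finset.sum_congr rfl fun j _ => e3 i j,
            Finset.sum_congr rfl fun i _ => Finset.sum_congr rfl fun j _ => e4 i j]
          simp only [Finset.sum_const, smul_zero, Finset.card_univ]
          rw [Finset.sum_congr rfl fun i (_ : i ∈ Finset.univ) => (Finset.sum_mul _ _ _).symm,
            ← Finset.sum_mul, hsq]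
          ring
  -- assemble
  have hfun : (fun ω => (3 * (n:ℝ)^2 / ((n:ℝ)^2 - 1)) *
        ((1 / (n:ℝ)^2) * ∑ i : Fin n, ∑ j : Fin n, |U i ω - V j ω|
          - (1 / (n:ℝ)) * ∑ i : Fin n, |U i ω - V i ω|))
      = (3 * (n:ℝ)^2 / ((n:ℝ)^2 - 1)) • T := by
    funext ω
    rw [Pi.smul_apply, smul_eq_mul, ← hrepr ω]
  rw [hfun, variance_smul, variance_eq_sub hT2]
  have hE : ℙ[T] = 0 := hET
  have hE2 : ℙ[T ^ 2] = 2/45 * (((n:ℝ)-1)/(n:ℝ)^2) := by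
    rw [← hET2]
    exact integral_congr_ae (Filter.Eventually.of_forall fun ω => by rw [Pi.pow_apply])
  rw [hE, hE2]
  have h1 : (n:ℝ) - 1 ≠ 0 := by linarith
  have h2 : (n:ℝ) + 1 ≠ 0 := by linarith
  have h3 : (n:ℝ)^2 - 1 ≠ 0 := by nlinarith
  field_simp
  ring
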